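/- For X = S¹ (the unit circle in ℂ) and n ≥ 1, the symmetric group S_n acts transitively on the connected components of the configuration space C^n(S¹), and the stabilizer of each connected component is a nontrivial cyclic subgroup of order n (generated by the cyclic permutation corresponding to rotating the labels along the circle) when n ≥ 2. -/

import Mathlib

/-- The configuration space of `n` distinct points on the unit circle `S¹ ⊆ ℂ`. -/
abbrev CircleConfig (n : ℕ) :=
  {f : Fin n → ℂ // Function.Injective f ∧ ∀ i, ‖f i‖ = 1}

/-- The right action of `S_n` on circle configurations: `(x ◁ σ) i = x (σ i)`. -/
def permAct {n : ℕ} (σ : Equiv.Perm (Fin n)) (x : CircleConfig n) : CircleConfig n :=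
  ⟨x.1 ∘ σ, x.2.1.comp σ.injective, fun i => x.2.2 (σ i)⟩

/-! ### Auxiliary lemmas -/

lemma aux_inj {n : ℕ} (θ : Fin n → ℝ) (hm : StrictMono θ)
    (hsp : ∀ k l : Fin n, θ l - θ k < 2 * Real.pi) :
    Function.Injective fun k => Complex.exp (θ k * Complex.I) := by
  intro k l h
  simp only [Complex.exp_eq_exp_iff_exists_int] at h
  obtain ⟨m, hm'⟩ := h
  have h2 : ((θ k : ℂ) - θ l - m * (2 * Real.pi)) * Complex.I = 0 := by
    rw [sub_mul, sub_mul, hm']; ring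
  have h3 : (θ k : ℂ) - θ l - m * (2 * Real.pi) = 0 :=
    by simpa [Complex.I_ne_zero] using mul_eq_zero.1 h2
  have h4 : θ k - θ l - m * (2 * Real.pi) = 0 := by exact_mod_cast h3
  have hp : (0:ℝ) < 2 * Real.pi := by positivity
  have hb1 : θ k - θ l < 2 * Real.pi := hsp l k
  have hb2 : θ l - θ k < 2 * Real.pi := hsp k l
  have hm0 : m = 0 := by
    rcases lt_trichotomy m 0 with h | h | h
    · have hle : m ≤ -1 := by omega
      have : (m : ℝ) ≤ -1 := by exact_mod_cast hle
      nlinarith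
    · exact h
    · have hle : (1:ℤ) ≤ m := h
      have : (1:ℝ) ≤ m := by exact_mod_cast hle
      nlinarith
  have : θ k = θ l := by rw [hm0] at h4; push_cast at h4; linarith
  exact hm.injective this

lemma permAct_continuous {n : ℕ} (σ : Equiv.Perm (Fin n)) :
    Continuous (permAct (n := n) σ) := by
  apply Continuous.subtype_mk
  exact continuous_pi fun i => (continuous_apply (σ i)).comp continuous_subtype_val

lemma permAct_mul {n : ℕ} (σ τ : Equiv.Perm (Fin n)) (x : CircleConfig n) :
    permAct σ (permAct τ x) = permAct (τ * σ) x := rfl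

lemma permAct_one {n : ℕ} (x : CircleConfig n) : permAct 1 x = x := rfl

lemma cc_permAct {n : ℕ} (σ : Equiv.Perm (Fin n)) {x y : CircleConfig n}
    (h : connectedComponent x = connectedComponent y) :
    connectedComponent (permAct σ x) = connectedComponent (permAct σ y) := by
  have hy : y ∈ connectedComponent x := h ▸ mem_connectedComponent
  exact connectedComponent_eq ((permAct_continuous σ).mapsTo_connectedComponent x hy)

lemma cc_permAct_iff {n : ℕ} (σ : Equiv.Perm (Fin n)) {x y : CircleConfig n} :
    connectedComponent (permAct σ x) = connectedComponent (permAct σ y) ↔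
      connectedComponent x = connectedComponent y := by
  refine ⟨fun h => ?_, cc_permAct σ⟩
  have := cc_permAct σ⁻¹ h
  rwa [permAct_mul, permAct_mul, mul_inv_cancel, permAct_one, permAct_one] at this

lemma joined_cc {n : ℕ} {x y : CircleConfig n} (h : Joined x y) :
    connectedComponent x = connectedComponent y :=
  connectedComponent_eq (pathComponent_subset_component x h)

lemma convex_pos {s a b : ℝ} (h0 : 0 ≤ s) (h1 : s ≤ 1) (ha : 0 < a) (hb : 0 < b) :
    0 < (1 - s) * a + s * b := by
  calc (0:ℝ) < min a b := lt_min ha hb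
    _ ≤ (1 - s) * a + s * b := by
      rcases min_cases a b with ⟨h, hab⟩ | ⟨h, hab⟩ <;> rw [h]
      · nlinarith [mul_nonneg h0 (sub_nonneg.2 hab)]
      · nlinarith [mul_nonneg (sub_nonneg.2 h1) (sub_nonneg.2 hab.le)]

/-- Two configurations given by strictly increasing angle families with spread `< 2π`
are joined by a path (linear interpolation of angles). -/
lemma joined_angles {n : ℕ} (x y : CircleConfig n) (θ η : Fin n → ℝ)
    (hx : ∀ k, x.1 k = Complex.exp (θ k * Complex.I))
    (hy : ∀ k, y.1 k = Complex.exp (η k * Complex.I))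
    (hθ : StrictMono θ) (hη : StrictMono η)
    (hθs : ∀ k l : Fin n, θ l - θ k < 2 * Real.pi)
    (hηs : ∀ k l : Fin n, η l - η k < 2 * Real.pi) :
    Joined x y := by
  set ψ : ℝ → Fin n → ℝ := fun t k => (1 - t) * θ k + t * η k with hψ
  have hmono : ∀ t : unitInterval, StrictMono (ψ t) := by
    intro t k l hkl
    have h1 := hθ hkl; have h2 := hη hkl
    have := convex_pos t.2.1 t.2.2 (sub_pos.2 h1) (sub_pos.2 h2)
    simp only [hψ]
    nlinarith
  have hspread : ∀ t : unitInterval, ∀ k l : Fin n, ψ t l - ψ t k < 2 * Real.pi := by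
    intro t k l
    have h1 := hθs k l; have h2 := hηs k l
    have := convex_pos t.2.1 t.2.2 (by linarith : 0 < 2 * Real.pi - (θ l - θ k))
      (by linarith : 0 < 2 * Real.pi - (η l - η k))
    simp only [hψ]
    nlinarith
  refine ⟨⟨⟨fun t => ⟨fun k => Complex.exp (ψ t k * Complex.I),
      aux_inj _ (hmono t) (hspread t),
      fun k => Complex.norm_exp_ofReal_mul_I _⟩, ?_⟩, ?_, ?_⟩⟩
  · apply Continuous.subtype_mk
    apply continuous_pi
    intro k
    apply Complex.continuous_exp.comp
    apply Continuous.mul _ continuous_const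
    apply Complex.continuous_ofReal.comp
    simp only [hψ]
    fun_prop
  · apply Subtype.ext; funext k
    simp [hψ, hx k]
  · apply Subtype.ext; funext k
    simp [hψ, hy k]

/-! ### The standard configuration -/

lemma stdAngle_strictMono {n : ℕ} :
    StrictMono (fun k : Fin n => 2 * Real.pi * k / n) := by
  intro k l hkl
  have hn : 0 < (n:ℝ) := by exact_mod_cast k.pos
  have h : (k:ℝ) < l := by exact_mod_cast hkl
  have hpi := Real.pi_pos
  simp only []
  gcongr

lemma stdAngle_spread {n : ℕ} (k l : Fin n) :
    2 * Real.pi * l / n - 2 * Real.pi * k / n < 2 * Real.pi := by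
  have hn : 0 < (n:ℝ) := by exact_mod_cast k.pos
  have hl : (l:ℝ) < n := by exact_mod_cast l.2
  have hk : (0:ℝ) ≤ k := k.val.cast_nonneg
  have hpi := Real.pi_pos
  rw [div_sub_div_same, div_lt_iff₀ hn]
  nlinarith

/-- The standard configuration: the `n`-th roots of unity in order. -/
noncomputable def stdCfg (n : ℕ) : CircleConfig n :=
  ⟨fun k => Complex.exp ((2 * Real.pi * k / n : ℝ) * Complex.I),
    aux_inj _ stdAngle_strictMono stdAngle_spread,
    fun _ => Complex.norm_exp_ofReal_mul_I _⟩

/-- Every configuration may be relabeled (sorting by argument) to be joined to the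
standard configuration. -/
lemma exists_perm_joined {n : ℕ} (x : CircleConfig n) :
    ∃ τ : Equiv.Perm (Fin n), Joined (permAct τ x) (stdCfg n) := by
  set θ : Fin n → ℝ := fun i => (x.1 i).arg with hθdef
  have hθinj : Function.Injective θ := by
    intro i j h
    apply x.2.1
    rw [← Complex.norm_mul_exp_arg_mul_I (x.1 i), ← Complex.norm_mul_exp_arg_mul_I (x.1 j),
      x.2.2 i, x.2.2 j]
    simp only [hθdef] at h
    rw [h]
  set τ := Tuple.sort θ with hτdef
  have hmono : StrictMono (θ ∘ τ) :=
    (Tuple.monotone_sort θ).strictMono_of_injective (hθinj.comp τ.injective)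
  refine ⟨τ, joined_angles _ _ (θ ∘ τ) (fun k : Fin n => 2 * Real.pi * k / n)
    ?_ ?_ hmono stdAngle_strictMono ?_ stdAngle_spread⟩
  · intro k
    show x.1 (τ k) = _
    rw [← Complex.norm_mul_exp_arg_mul_I (x.1 (τ k)), x.2.2 (τ k)]
    simp [hθdef]
  · intro k; rfl
  · intro k l
    have h1 : (θ ∘ τ) l ≤ Real.pi := Complex.arg_le_pi _
    have h2 : -Real.pi < (θ ∘ τ) k := Complex.neg_pi_lt_arg _
    have := Real.pi_pos
    linarith

/-! ### The orientation invariant -/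

noncomputable def Fm {n : ℕ} (i j k : Fin n) (x : CircleConfig n) : ℝ :=
  ((x.1 k - x.1 i) * (starRingEnd ℂ) (x.1 j - x.1 i)).im

lemma Fm_continuous {n : ℕ} (i j k : Fin n) : Continuous (Fm (n := n) i j k) := by
  have h : ∀ l : Fin n, Continuous fun x : CircleConfig n => x.1 l := fun l =>
    (continuous_apply l).comp continuous_subtype_val
  exact Complex.continuous_im.comp
    (((h k).sub (h i)).mul (Complex.continuous_conj.comp ((h j).sub (h i))))

lemma Fm_permAct {n : ℕ} (i j k : Fin n) (σ : Equiv.Perm (Fin n)) (x : CircleConfig n) :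
    Fm i j k (permAct σ x) = Fm (σ i) (σ j) (σ k) x := rfl

lemma Fm_swap {n : ℕ} (i j k : Fin n) (x : CircleConfig n) :
    Fm i k j x = -Fm i j k x := by
  simp only [Fm, Complex.mul_im, Complex.conj_re, Complex.conj_im, Complex.sub_re,
    Complex.sub_im]
  ring

/-- Three distinct points on the unit circle are never collinear. -/
lemma Fm_ne_zero {n : ℕ} {i j k : Fin n} (x : CircleConfig n)
    (hij : i ≠ j) (hik : i ≠ k) (hjk : j ≠ k) : Fm i j k x ≠ 0 := by
  intro h0
  set a := x.1 i with hA
  set b := x.1 j with hB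
  set c := x.1 k with hC
  have hinj := x.2.1
  have ha1 : ‖a‖ = 1 := x.2.2 i
  have hb1 : ‖b‖ = 1 := x.2.2 j
  have hc1 : ‖c‖ = 1 := x.2.2 k
  have hane : a ≠ 0 := by intro h; rw [h] at ha1; simp at ha1
  have hbne : b ≠ 0 := by intro h; rw [h] at hb1; simp at hb1
  have hcne : c ≠ 0 := by intro h; rw [h] at hc1; simp at hc1
  have hca : (starRingEnd ℂ) a = a⁻¹ := by
    apply (inv_eq_of_mul_eq_one_right ?_).symm
    rw [Complex.mul_conj, ← Complex.sq_norm, ha1]; norm_num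
  have hcb : (starRingEnd ℂ) b = b⁻¹ := by
    apply (inv_eq_of_mul_eq_one_right ?_).symm
    rw [Complex.mul_conj, ← Complex.sq_norm, hb1]; norm_num
  have hcc : (starRingEnd ℂ) c = c⁻¹ := by
    apply (inv_eq_of_mul_eq_one_right ?_).symm
    rw [Complex.mul_conj, ← Complex.sq_norm, hc1]; norm_num
  have h1 := Complex.sub_conj ((c - a) * (starRingEnd ℂ) (b - a))
  rw [show ((c - a) * (starRingEnd ℂ) (b - a)).im = 0 from h0] at h1
  norm_num at h1
  rw [hca, hcb, hcc] at h1
  have key0 : a * ((c - a) * (a - b) * (c - b)) = 0 := by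
    field_simp at h1
    linear_combination a * h1
  have key : (c - a) * (a - b) * (c - b) = 0 := by
    rcases mul_eq_zero.1 key0 with h | h
    · exact absurd h hane
    · exact h
  rcases mul_eq_zero.1 key with h | h
  · rcases mul_eq_zero.1 h with h | h
    · exact hik (hinj (by rw [← hA, ← hC, sub_eq_zero.1 h])).symm
    · exact hij (hinj (by rw [← hA, ← hB, (sub_eq_zero.1 h)]))
  · exact hjk (hinj (by rw [← hB, ← hC, sub_eq_zero.1 h])).symm

lemma trig_id (a b c : ℝ) :
    (Real.sin c - Real.sin a) * (Real.cos b - Real.cos a)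
      - (Real.cos c - Real.cos a) * (Real.sin b - Real.sin a)
    = 4 * Real.sin ((b - a) / 2) * Real.sin ((c - b) / 2) * Real.sin ((c - a) / 2) := by
  rw [Real.sin_sub_sin, Real.sin_sub_sin, Real.cos_sub_cos, Real.cos_sub_cos,
    show (c - b) / 2 = (c + a) / 2 - (b + a) / 2 by ring, Real.sin_sub]
  ring

lemma Fm_angles {n : ℕ} (i j k : Fin n) (x : CircleConfig n) (θ : Fin n → ℝ)
    (hx : ∀ l, x.1 l = Complex.exp (θ l * Complex.I)) :
    Fm i j k x = 4 * Real.sin ((θ j - θ i) / 2) * Real.sin ((θ k - θ j) / 2)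
      * Real.sin ((θ k - θ i) / 2) := by
  rw [← trig_id]
  simp only [Fm, hx, Complex.mul_im, Complex.conj_re, Complex.conj_im, Complex.sub_re,
    Complex.sub_im, Complex.exp_ofReal_mul_I_re, Complex.exp_ofReal_mul_I_im]
  ring

lemma Fm_pos_of_angles {n : ℕ} (i j k : Fin n) (x : CircleConfig n) (θ : Fin n → ℝ)
    (hx : ∀ l, x.1 l = Complex.exp (θ l * Complex.I))
    (h1 : θ i < θ j) (h2 : θ j < θ k) (h3 : θ k - θ i < 2 * Real.pi) :
    0 < Fm i j k x := by
  rw [Fm_angles i j k x θ hx]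
  have s1 : 0 < Real.sin ((θ j - θ i) / 2) :=
    Real.sin_pos_of_pos_of_lt_pi (by linarith) (by linarith)
  have s2 : 0 < Real.sin ((θ k - θ j) / 2) :=
    Real.sin_pos_of_pos_of_lt_pi (by linarith) (by linarith)
  have s3 : 0 < Real.sin ((θ k - θ i) / 2) :=
    Real.sin_pos_of_pos_of_lt_pi (by linarith) (by linarith)
  positivity

lemma Fm_std_pos {n : ℕ} {i j k : Fin n} (h1 : i < j) (h2 : j < k) :
    0 < Fm i j k (stdCfg n) :=
  Fm_pos_of_angles i j k _ (fun k : Fin n => 2 * Real.pi * k / n) (fun _ => rfl)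
    (stdAngle_strictMono h1) (stdAngle_strictMono h2) (by linarith [stdAngle_spread i k])

/-- The sign of `Fm` is constant on connected components. -/
lemma Fm_pos_of_cc {n : ℕ} {i j k : Fin n} {x y : CircleConfig n}
    (hij : i ≠ j) (hik : i ≠ k) (hjk : j ≠ k)
    (hcc : connectedComponent x = connectedComponent y)
    (hx : 0 < Fm i j k x) : 0 < Fm i j k y := by
  by_contra hy
  have hyneg : Fm i j k y < 0 :=
    lt_of_le_of_ne (not_lt.1 hy) (Fm_ne_zero y hij hik hjk)
  have hymem : y ∈ connectedComponent x := hcc ▸ mem_connectedComponent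
  have himg : IsPreconnected (Fm i j k '' connectedComponent x) :=
    (isPreconnected_connectedComponent).image _ (Fm_continuous i j k).continuousOn
  have h0 : (0:ℝ) ∈ Fm i j k '' connectedComponent x :=
    himg.Icc_subset ⟨y, hymem, rfl⟩ ⟨x, mem_connectedComponent, rfl⟩ ⟨hyneg.le, hx.le⟩
  obtain ⟨z, _, hz0⟩ := h0
  exact Fm_ne_zero z hij hik hjk hz0

/-! ### The rotation and the stabilizer -/

lemma stab_mul {n : ℕ} {x : CircleConfig n} {σ τ : Equiv.Perm (Fin n)}
    (hσ : connectedComponent (permAct σ x) = connectedComponent x)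
    (hτ : connectedComponent (permAct τ x) = connectedComponent x) :
    connectedComponent (permAct (σ * τ) x) = connectedComponent x := by
  have h := cc_permAct τ hσ
  rw [permAct_mul] at h
  exact h.trans hτ

lemma finRotate_pow_val {m p : ℕ} (k : Fin (m + 1)) :
    (((finRotate (m + 1)) ^ p) k).val = (k.val + p) % (m + 1) := by
  induction p with
  | zero => simp [Nat.mod_eq_of_lt k.2]
  | succ p ih =>
    rw [pow_succ', Equiv.Perm.mul_apply, finRotate_succ_apply]
    have h2 : ((finRotate (m + 1) ^ p) k + 1).val
        = (((finRotate (m + 1) ^ p) k).val + 1) % (m + 1) := by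
      simp [Fin.add_def]
    rw [h2, ih, Nat.mod_add_mod]
    ring_nf

lemma stdAngle_strictMono' {n : ℕ} (c : ℝ) :
    StrictMono (fun k : Fin n => 2 * Real.pi * k / n + c) :=
  fun _ _ h => add_lt_add_left (stdAngle_strictMono h) c

lemma stdAngle_spread' {n : ℕ} (c : ℝ) (k l : Fin n) :
    (2 * Real.pi * l / n + c) - (2 * Real.pi * k / n + c) < 2 * Real.pi := by
  have := stdAngle_spread k l; linarith

lemma joined_rot {m : ℕ} :
    Joined (permAct (finRotate (m + 1)) (stdCfg (m + 1))) (stdCfg (m + 1)) := by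
  set n := m + 1
  have hn : 0 < (n:ℝ) := by positivity
  have hpi := Real.pi_pos
  apply joined_angles _ _ (fun k : Fin n => 2 * Real.pi * k / n + 2 * Real.pi / n)
    (fun k : Fin n => 2 * Real.pi * k / n)
  · intro k
    show (stdCfg n).1 (finRotate n k) = _
    show Complex.exp _ = _
    rcases Nat.lt_or_ge (k.val + 1) n with h | h
    · have hval : ((finRotate n) k).val = k.val + 1 := by
        rw [finRotate_succ_apply]; simp [Fin.add_def, Nat.mod_eq_of_lt h]
      rw [hval]
      congr 1
      push_cast
      field_simp
    · have hkeq : k.val = m := by omega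
      have hval : ((finRotate n) k).val = 0 := by
        rw [finRotate_succ_apply]; simp [Fin.add_def, hkeq]; exact Nat.mod_self _
      rw [hval]
      have hang : (2 * Real.pi * k.val / n + 2 * Real.pi / n : ℝ) = 2 * Real.pi := by
        rw [hkeq]
        field_simp
        push_cast
        simp only [n]; push_cast; ring
      rw [hang]
      norm_num [Complex.exp_two_pi_mul_I]
  · intro k; rfl
  · exact stdAngle_strictMono' _
  · exact stdAngle_strictMono
  · exact stdAngle_spread' _
  · exact stdAngle_spread

lemma rot_pow_stab {m : ℕ} (p : ℕ) :
    connectedComponent (permAct ((finRotate (m + 1)) ^ p) (stdCfg (m + 1)))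
      = connectedComponent (stdCfg (m + 1)) := by
  induction p with
  | zero => rw [pow_zero, permAct_one]
  | succ p ih => rw [pow_succ]; exact stab_mul ih (joined_cc joined_rot)

/-- A stabilizing permutation fixing `0` is the identity. -/
lemma stab_fix_zero {m : ℕ} (ρ : Equiv.Perm (Fin (m + 1)))
    (hρ : connectedComponent (permAct ρ (stdCfg (m + 1)))
      = connectedComponent (stdCfg (m + 1)))
    (h0 : ρ 0 = 0) : ρ = 1 := by
  have hne : ∀ l : Fin (m + 1), l ≠ 0 → ρ l ≠ 0 := by
    intro l hl h
    exact hl (ρ.injective (h.trans h0.symm))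
  have hsm : StrictMono ⇑ρ := by
    intro k l hkl
    rcases eq_or_ne k 0 with rfl | hk
    · rw [h0]
      exact Fin.pos_of_ne_zero (hne l (Fin.pos_iff_ne_zero.mp hkl))
    · have hk0 : (0 : Fin (m + 1)) < k := Fin.pos_of_ne_zero hk
      have hl0 : (0 : Fin (m + 1)) < l := hk0.trans hkl
      have hpos : 0 < Fm 0 k l (stdCfg (m + 1)) := Fm_std_pos hk0 hkl
      have hpos2 : 0 < Fm 0 k l (permAct ρ (stdCfg (m + 1))) :=
        Fm_pos_of_cc hk0.ne hl0.ne hkl.ne hρ.symm hpos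
      rw [Fm_permAct, h0] at hpos2
      rcases lt_trichotomy (ρ k) (ρ l) with h | h | h
      · exact h
      · exact absurd (ρ.injective h) hkl.ne
      · exfalso
        have hρl0 : (0 : Fin (m + 1)) < ρ l := Fin.pos_of_ne_zero (hne l hl0.ne')
        have : 0 < Fm 0 (ρ l) (ρ k) (stdCfg (m + 1)) := Fm_std_pos hρl0 h
        rw [show Fm 0 (ρ k) (ρ l) (stdCfg (m+1)) = -Fm 0 (ρ l) (ρ k) (stdCfg (m+1)) from
          Fm_swap 0 (ρ l) (ρ k) _] at hpos2
        linarith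
  have inst : WellFoundedLT (Fin (m + 1)) := inferInstance
  have hfun : ⇑ρ = id :=
    (@StrictMono.range_inj (Fin (m + 1)) (Fin (m + 1)) _ _ inst ⇑ρ id hsm strictMono_id).1
      (by rw [Set.range_id]; exact ρ.surjective.range_eq)
  exact Equiv.ext (congrFun hfun)

lemma stab_sub {m : ℕ} (σ : Equiv.Perm (Fin (m + 1)))
    (hσ : connectedComponent (permAct σ (stdCfg (m + 1)))
      = connectedComponent (stdCfg (m + 1))) :
    σ ∈ Subgroup.zpowers (finRotate (m + 1)) := by
  set r := finRotate (m + 1) with hr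
  have hρstab : connectedComponent
        (permAct (r ^ ((m + 1) - (σ 0).val) * σ) (stdCfg (m + 1)))
      = connectedComponent (stdCfg (m + 1)) :=
    stab_mul (rot_pow_stab ((m + 1) - (σ 0).val)) hσ
  have h0 : (r ^ ((m + 1) - (σ 0).val) * σ) 0 = 0 := by
    have hval := finRotate_pow_val (m := m) (p := (m + 1) - (σ 0).val) (σ 0)
    have hlt : (σ 0).val < m + 1 := (σ 0).2
    apply Fin.ext
    rw [Equiv.Perm.mul_apply, hval]
    simp only [Fin.val_zero]
    rw [show (σ 0).val + (m + 1 - (σ 0).val) = m + 1 by omega, Nat.mod_self]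
  have h1 : r ^ ((m + 1) - (σ 0).val) * σ = 1 := stab_fix_zero _ hρstab h0
  have h2 : σ = (r ^ ((m + 1) - (σ 0).val))⁻¹ := eq_inv_of_mul_eq_one_right h1
  refine ⟨-(((m + 1) - (σ 0).val : ℕ) : ℤ), ?_⟩
  show r ^ (-(((m + 1) - (σ 0).val : ℕ) : ℤ)) = σ
  rw [zpow_neg, zpow_natCast, ← h2]

lemma zpowers_sub_stab {m : ℕ} (σ : Equiv.Perm (Fin (m + 1)))
    (hσ : σ ∈ Subgroup.zpowers (finRotate (m + 1))) :
    connectedComponent (permAct σ (stdCfg (m + 1)))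
      = connectedComponent (stdCfg (m + 1)) := by
  obtain ⟨q, rfl⟩ := mem_powers_iff_mem_zpowers.2 hσ
  exact rot_pow_stab q

/-! ### The main theorem -/

/-- `S_n` acts transitively on the connected components of `C^n(S¹)`, and for
`n ≥ 2` the stabilizer of each connected component is the nontrivial cyclic
subgroup of order `n` generated by a cyclic permutation (rotation of labels). -/
theorem stmt7 (n : ℕ) (hn : 1 ≤ n) :
    (∀ x y : CircleConfig n, ∃ σ : Equiv.Perm (Fin n),
      connectedComponent (permAct σ x) = connectedComponent y) ∧
    (2 ≤ n → ∀ x : CircleConfig n, ∃ c : Equiv.Perm (Fin n),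
      c.IsCycle ∧ orderOf c = n ∧ c ≠ 1 ∧
      {σ : Equiv.Perm (Fin n) | connectedComponent (permAct σ x) = connectedComponent x}
        = (Subgroup.zpowers c : Set (Equiv.Perm (Fin n)))) := by
  constructor
  · -- transitivity
    intro x y
    obtain ⟨τ₁, h1⟩ := exists_perm_joined x
    obtain ⟨τ₂, h2⟩ := exists_perm_joined y
    refine ⟨τ₁ * τ₂⁻¹, ?_⟩
    have e1 := joined_cc h1
    have e2 := joined_cc h2
    have h := cc_permAct τ₂⁻¹ (e1.trans e2.symm)
    rw [permAct_mul, permAct_mul, mul_inv_cancel, permAct_one] at h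
    exact h
  · -- stabilizer
    intro hn2 x
    obtain ⟨m, rfl⟩ : ∃ m, n = m + 2 := ⟨n - 2, by omega⟩
    set r := finRotate (m + 2) with hrdef
    have hrcyc : r.IsCycle := isCycle_finRotate
    have hrord : orderOf r = m + 2 := by
      rw [hrcyc.orderOf, support_finRotate]
      simp
    obtain ⟨τ, hτ⟩ := exists_perm_joined x
    have hcc : connectedComponent (permAct τ x) = connectedComponent (stdCfg (m + 2)) :=
      joined_cc hτ
    have horder : orderOf (τ * r * τ⁻¹) = m + 2 := by
      have h := orderOf_injective (MulAut.conj τ).toMonoidHom (MulEquiv.injective _) r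
      simpa [MulAut.conj_apply, hrord] using h
    refine ⟨τ * r * τ⁻¹, hrcyc.conj, horder,
      fun h => by rw [h, orderOf_one] at horder; omega, ?_⟩
    have hA : ∀ g : Equiv.Perm (Fin (m + 2)),
        permAct (τ⁻¹ * g * τ) (permAct τ x) = permAct τ (permAct g x) := by
      intro g
      rw [permAct_mul, permAct_mul]
      congr 1
      group
    have hkey : ∀ g : Equiv.Perm (Fin (m + 2)),
        connectedComponent (permAct (τ⁻¹ * g * τ) (stdCfg (m + 2)))
            = connectedComponent (stdCfg (m + 2)) ↔
        connectedComponent (permAct g x) = connectedComponent x := by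
      intro g
      constructor
      · intro h
        have h1 := cc_permAct (τ⁻¹ * g * τ) hcc
        rw [hA g, h, ← hcc] at h1
        exact (cc_permAct_iff τ).1 h1
      · intro h
        have h1 := cc_permAct (τ⁻¹ * g * τ) hcc
        rw [hA g] at h1
        have h2 := cc_permAct τ h
        rw [hcc] at h2
        exact h1.symm.trans h2
    ext σ
    simp only [Set.mem_setOf_eq, SetLike.mem_coe, Subgroup.mem_zpowers_iff]
    constructor
    · intro hσ
      obtain ⟨z, hz⟩ := Subgroup.mem_zpowers_iff.1 (stab_sub _ ((hkey σ).2 hσ))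
      refine ⟨z, ?_⟩
      rw [conj_zpow, hz]
      group
    · rintro ⟨z, hz⟩
      apply (hkey σ).1
      apply zpowers_sub_stab
      refine Subgroup.mem_zpowers_iff.2 ⟨z, ?_⟩
      rw [← hz, conj_zpow]
      group
      rfl
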